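/- In Euclidean space, with w = (1−t) y + t z for t ∈ (0,1), equality d(x,w)² = (1−t) d(x,y)² + t d(x,z)² − t(1−t) d(y,z)² holds for every x; conversely, in a metric space satisfying the κ=0 quadruple condition, if w ∈ (y,z) with d(y,w) = t d(y,z) and equality d(x,w)² = (1−t) d(x,y)² + t d(x,z)² − t(1−t) d(y,z)² holds, then the four points x, y, z, w embed isometrically into the Euclidean plane. -/

import Mathlib

/-- The κ = 0 comparison angle at `x` of the triple `(x; y, z)`. -/
noncomputable def cangle {X : Type*} [MetricSpace X] (x y z : X) : ℝ :=
  Real.arccos ((dist x y ^ 2 + dist x z ^ 2 - dist y z ^ 2) / (2 * dist x y * dist x z))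

lemma aux_dist_sq {H : Type*} [NormedAddCommGroup H] [InnerProductSpace ℝ H]
    (x y z : H) (t : ℝ) (h0 : 0 ≤ t) (h1 : t ≤ 1) :
    dist x ((1 - t) • y + t • z) ^ 2
      = (1 - t) * dist x y ^ 2 + t * dist x z ^ 2 - t * (1 - t) * dist y z ^ 2 := by
  have hd1 : dist x y = ‖x - y‖ := dist_eq_norm x y
  have hd2 : dist x z = ‖x - z‖ := dist_eq_norm x z
  have hd3 : dist y z = ‖(x - y) - (x - z)‖ := by
    rw [dist_comm, dist_eq_norm]
    congr 1; abel
  have h4 : x - ((1 - t) • y + t • z) = (1 - t) • (x - y) + t • (x - z) := by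
    module
  rw [dist_eq_norm, h4, hd1, hd2, hd3, norm_add_sq_real, norm_sub_sq_real (x - y) (x - z),
    norm_smul, norm_smul, real_inner_smul_left, real_inner_smul_right,
    Real.norm_eq_abs, Real.norm_eq_abs, abs_of_nonneg (by linarith : (0:ℝ) ≤ 1 - t),
    abs_of_nonneg h0]
  ring

set_option maxHeartbeats 1000000 in
theorem stmt_12 :
    (∀ (H : Type) (_ : NormedAddCommGroup H) (_ : InnerProductSpace ℝ H),
      ∀ (x y z : H) (t : ℝ), t ∈ Set.Ioo (0 : ℝ) 1 →
        dist x ((1 - t) • y + t • z) ^ 2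
          = (1 - t) * dist x y ^ 2 + t * dist x z ^ 2 - t * (1 - t) * dist y z ^ 2) ∧
    (∀ (X : Type) (_ : MetricSpace X),
      (∀ a b c e : X, a ≠ b → a ≠ c → a ≠ e → b ≠ c → b ≠ e → c ≠ e →
        cangle a b c + cangle a c e + cangle a e b ≤ 2 * Real.pi) →
      ∀ (x y z w : X) (t : ℝ), t ∈ Set.Ioo (0 : ℝ) 1 →
        dist y w + dist w z = dist y z → w ≠ y → w ≠ z →
        dist y w = t * dist y z →
        dist x w ^ 2 = (1 - t) * dist x y ^ 2 + t * dist x z ^ 2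
            - t * (1 - t) * dist y z ^ 2 →
        ∃ x' y' z' w' : EuclideanSpace ℝ (Fin 2),
          dist x' y' = dist x y ∧ dist x' z' = dist x z ∧ dist x' w' = dist x w ∧
          dist y' z' = dist y z ∧ dist y' w' = dist y w ∧ dist z' w' = dist z w ∧
          w' ∈ segment ℝ y' z') := by
  constructor
  · intro H _ _ x y z t ht
    exact aux_dist_sq x y z t ht.1.le ht.2.le
  · intro X _ _quad x y z w t ht hbet hwy hwz hyw hxw
    obtain ⟨ht0, ht1⟩ := ht
    set a := dist x y with ha
    set b := dist x z with hb
    set c := dist y z with hc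
    have ha0 : 0 ≤ a := dist_nonneg
    have hb0 : 0 ≤ b := dist_nonneg
    have hc0 : 0 < c := by
      have h1 : 0 < dist y w := dist_pos.2 (Ne.symm hwy)
      have h2 : 0 < dist w z := dist_pos.2 hwz
      linarith [hbet]
    set p := (a ^ 2 + c ^ 2 - b ^ 2) / (2 * c) with hp
    have tri1 : b ≤ a + c := dist_triangle x y z
    have tri2 : a ≤ b + c := by
      have := dist_triangle x z y
      rw [dist_comm z y] at this
      linarith
    have tri3 : c ≤ a + b := by
      have := dist_triangle y x z
      rw [dist_comm y x] at this
      linarith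
    have hq2 : 0 ≤ a ^ 2 - p ^ 2 := by
      have hle : p ^ 2 ≤ a ^ 2 := by
        rw [hp, div_pow, div_le_iff₀ (by positivity)]
        nlinarith [mul_nonneg (mul_nonneg (by linarith : (0:ℝ) ≤ a + c - b)
            (by linarith : (0:ℝ) ≤ a + c + b))
            (mul_nonneg (by linarith : (0:ℝ) ≤ b + c - a) (by linarith : (0:ℝ) ≤ b - c + a))]
      linarith
    set q := Real.sqrt (a ^ 2 - p ^ 2) with hqdef
    have hq : q ^ 2 = a ^ 2 - p ^ 2 := Real.sq_sqrt hq2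
    set y' : EuclideanSpace ℝ (Fin 2) := !₂[0, 0] with hy'
    set z' : EuclideanSpace ℝ (Fin 2) := !₂[c, 0] with hz'
    set x' : EuclideanSpace ℝ (Fin 2) := !₂[p, q] with hx'
    set w' : EuclideanSpace ℝ (Fin 2) := (1 - t) • y' + t • z' with hw'
    have hpc : 2 * c * p = a ^ 2 + c ^ 2 - b ^ 2 := by
      rw [hp]; field_simp [hc0.ne']
    have dyz : dist y' z' = c := by
      rw [EuclideanSpace.dist_eq, Fin.sum_univ_two]
      simp only [hy', hz', PiLp.toLp_apply, Matrix.cons_val_zero, Matrix.cons_val_one, Matrix.head_cons, Real.dist_eq, sq_abs]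
      rw [show (0 - c) ^ 2 + ((0:ℝ) - 0) ^ 2 = c ^ 2 by ring, Real.sqrt_sq hc0.le]
    have dxy : dist x' y' = a := by
      rw [EuclideanSpace.dist_eq, Fin.sum_univ_two]
      simp only [hy', hx', PiLp.toLp_apply, Matrix.cons_val_zero, Matrix.cons_val_one, Matrix.head_cons, Real.dist_eq, sq_abs]
      rw [show (p - 0) ^ 2 + (q - 0) ^ 2 = a ^ 2 by nlinarith [hq], Real.sqrt_sq ha0]
    have dxz : dist x' z' = b := by
      rw [EuclideanSpace.dist_eq, Fin.sum_univ_two]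
      simp only [hz', hx', PiLp.toLp_apply, Matrix.cons_val_zero, Matrix.cons_val_one, Matrix.head_cons, Real.dist_eq, sq_abs]
      rw [show (p - c) ^ 2 + (q - 0) ^ 2 = b ^ 2 by nlinarith [hq, hpc],
        Real.sqrt_sq hb0]
    have hyw' : y' - w' = t • (y' - z') := by rw [hw']; module
    have hzw' : z' - w' = (1 - t) • (z' - y') := by rw [hw']; module
    have dyw : dist y' w' = dist y w := by
      rw [dist_eq_norm, hyw', norm_smul, Real.norm_eq_abs, abs_of_nonneg ht0.le,
        ← dist_eq_norm, dyz, hyw]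
    have dzw : dist z' w' = dist z w := by
      have hwzd : dist w z = (1 - t) * c := by
        have : dist y w + dist w z = c := hbet
        rw [hyw] at this; linarith
      rw [dist_eq_norm, hzw', norm_smul, Real.norm_eq_abs,
        abs_of_nonneg (by linarith : (0:ℝ) ≤ 1 - t), ← dist_eq_norm, dist_comm z' y', dyz,
        dist_comm z w, hwzd]
    have dxw : dist x' w' = dist x w := by
      have h1 : dist x' w' ^ 2 = dist x w ^ 2 := by
        rw [hw', aux_dist_sq x' y' z' t ht0.le ht1.le, dxy, dxz, dyz, hxw]
      have h2 := dist_nonneg (x := x') (y := w')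
      have h3 := dist_nonneg (x := x) (y := w)
      nlinarith [h1]
    exact ⟨x', y', z', w', dxy, dxz, dxw, dyz, dyw, dzw,
      ⟨1 - t, t, by linarith, ht0.le, by ring, rfl⟩⟩
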